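/- For real x ≠ 0 let v(x) = exp(−½ Log((x−i)/(x+i))) − 1 and for all real x let w(x) = exp(½ Log((1+ix)/(1−ix))) − 1, where Log is the principal complex logarithm (so v(±∞) = 0 and w(0) = 0). For ε ∈ (0,1] set F_ε(x) = v(x/ε)·w(εx). Let I₀ = [−1−√2, 1+√2]. Then, as ε → 0: sup_{x ∈ I₀, x ≠ 0} |F_ε'(x)| → 0 and ∫_{I₀} |F_ε''(x)| dx → 0 (the derivatives taken on I₀ \ {0}). -/

import Mathlib

open Filter

noncomputable section

/-- `v(x) = exp(−½ Log((x−i)/(x+i))) − 1` (for `x ≠ 0`; principal logarithm). -/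
def vf (x : ℝ) : ℂ :=
  Complex.exp (-(1/2 : ℂ) * Complex.log (((x : ℂ) - Complex.I) / ((x : ℂ) + Complex.I))) - 1

/-- `w(x) = exp(½ Log((1+ix)/(1−ix))) − 1` (principal logarithm). -/
def wf (x : ℝ) : ℂ :=
  Complex.exp ((1/2 : ℂ) * Complex.log ((1 + Complex.I * x) / (1 - Complex.I * x))) - 1

/-- `F_ε(x) = v(x/ε) · w(εx)`. -/
def Ff (ε : ℝ) (x : ℝ) : ℂ := vf (x / ε) * wf (ε * x)

/-! ### Auxiliary definitions -/

def Complex.abs : AbsoluteValue ℂ ℝ := NormedField.toAbsoluteValue ℂ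

lemma Complex.norm_eq_abs (z : ℂ) : ‖z‖ = Complex.abs z := rfl

@[simp] lemma Complex.abs_eq_norm' (z : ℂ) : Complex.abs z = ‖z‖ := rfl

lemma Complex.abs_apply (z : ℂ) : Complex.abs z = Real.sqrt (Complex.normSq z) := by
  rw [← Complex.norm_eq_abs, Complex.norm_def]

lemma Complex.abs_conj (z : ℂ) : Complex.abs ((starRingEnd ℂ) z) = Complex.abs z :=
  Complex.norm_conj z

lemma Complex.abs_ofReal (r : ℝ) : Complex.abs (r : ℂ) = |r| := Complex.norm_real r

lemma Complex.abs_exp (z : ℂ) : Complex.abs (Complex.exp z) = Real.exp z.re := Complex.norm_exp z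

lemma Complex.re_le_abs (z : ℂ) : z.re ≤ Complex.abs z := Complex.re_le_norm z

def Vc (y : ℝ) : ℂ := Complex.exp (-(1/2 : ℂ) * Complex.log (((y : ℂ) - Complex.I) / ((y : ℂ) + Complex.I)))

def Wc (x : ℝ) : ℂ := Complex.exp ((1/2 : ℂ) * Complex.log ((1 + Complex.I * x) / (1 - Complex.I * x)))

def vd (y : ℝ) : ℂ := -Complex.I * Vc y / ((y:ℂ)^2 + 1)

def wd (x : ℝ) : ℂ := Complex.I * Wc x / (1 + (x:ℂ)^2)

def vdd (y : ℝ) : ℂ := Vc y * (2*Complex.I*(y:ℂ) - 1) / (((y:ℂ)^2 + 1)^2)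

def wdd (x : ℝ) : ℂ := -Wc x * (1 + 2*Complex.I*(x:ℂ)) / ((1 + (x:ℂ)^2)^2)

def F1 (ε x : ℝ) : ℂ :=
  (vd (x/ε) * (ε:ℂ)⁻¹) * wf (ε*x) + vf (x/ε) * (wd (ε*x) * ε)

def F2 (ε x : ℝ) : ℂ :=
  ((vdd (x/ε) * (ε:ℂ)⁻¹ * (ε:ℂ)⁻¹) * wf (ε*x) + (vd (x/ε) * (ε:ℂ)⁻¹) * (wd (ε*x) * ε))
  + ((vd (x/ε) * (ε:ℂ)⁻¹) * (wd (ε*x) * ε) + vf (x/ε) * (wdd (ε*x) * ε * ε))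

/-! ### Elementary nonvanishing facts -/

lemma den1 (y : ℝ) : ((y:ℂ) + Complex.I) ≠ 0 := by
  intro h
  have := congrArg Complex.im h
  simp at this

lemma den2 (y : ℝ) : ((y:ℂ) - Complex.I) ≠ 0 := by
  intro h
  have := congrArg Complex.im h
  simp at this

lemma den3 (y : ℝ) : (1 - Complex.I * y) ≠ 0 := by
  intro h
  have := congrArg Complex.re h
  simp at this

lemma den4 (y : ℝ) : (1 + Complex.I * y) ≠ 0 := by
  intro h
  have := congrArg Complex.re h
  simp at this

lemma g_ne (y : ℝ) : (((y:ℂ) - Complex.I) / ((y:ℂ) + Complex.I)) ≠ 0 :=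
  div_ne_zero (den2 y) (den1 y)

lemma h_ne (y : ℝ) : ((1 + Complex.I * y) / (1 - Complex.I * y)) ≠ 0 :=
  div_ne_zero (den4 y) (den3 y)

lemma sq_ne (y : ℝ) : ((y:ℂ)^2 + 1) ≠ 0 := by
  have : ((y:ℂ)^2 + 1) = (((y^2 + 1 : ℝ)) : ℂ) := by push_cast; ring
  rw [this]
  simp only [ne_eq, Complex.ofReal_eq_zero]
  positivity

lemma sq_ne' (y : ℝ) : (1 + (y:ℂ)^2) ≠ 0 := by
  rw [add_comm]; exact sq_ne y

lemma abs_g (y : ℝ) : Complex.abs (((y:ℂ) - Complex.I) / ((y:ℂ) + Complex.I)) = 1 := by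
  rw [map_div₀]
  rw [show ((y:ℂ) - Complex.I) = (starRingEnd ℂ) ((y:ℂ) + Complex.I) by simp [Complex.ext_iff]]
  rw [Complex.abs_conj]
  exact div_self (by simpa using Complex.abs.ne_zero (den1 y))

lemma abs_h (y : ℝ) : Complex.abs ((1 + Complex.I * y) / (1 - Complex.I * y)) = 1 := by
  rw [map_div₀]
  rw [show ((1 : ℂ) + Complex.I * y) = (starRingEnd ℂ) (1 - Complex.I * y) by simp [Complex.ext_iff]]
  rw [Complex.abs_conj]
  exact div_self (by simpa using Complex.abs.ne_zero (den3 y))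

lemma g_mem (y : ℝ) (hy : y ≠ 0) : (((y:ℂ) - Complex.I) / ((y:ℂ) + Complex.I)) ∈ Complex.slitPlane := by
  right
  have hns : Complex.normSq ((y:ℂ) + Complex.I) = y^2 + 1 := by
    simp [Complex.normSq_apply]; ring
  have : ((((y:ℂ) - Complex.I) / ((y:ℂ) + Complex.I))).im = (-2*y) / (y^2+1) := by
    rw [Complex.div_im, hns]
    simp
    ring
  rw [this]
  have h1 : (0:ℝ) < y^2 + 1 := by positivity
  intro h
  rcases div_eq_zero_iff.mp h with h' | h'
  · exact hy (by linarith)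
  · linarith

lemma h_mem (y : ℝ) : ((1 + Complex.I * y) / (1 - Complex.I * y)) ∈ Complex.slitPlane := by
  rcases eq_or_ne y 0 with rfl | hy
  · simp [Complex.slitPlane]
  right
  have hns : Complex.normSq (1 - Complex.I * y) = 1 + y^2 := by
    simp [Complex.normSq_apply]; ring
  have : (((1 + Complex.I * y) / (1 - Complex.I * y))).im = (2*y) / (1+y^2) := by
    rw [Complex.div_im, hns]
    simp
    ring
  rw [this]
  have h1 : (0:ℝ) < 1 + y^2 := by positivity
  intro h
  rcases div_eq_zero_iff.mp h with h' | h'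
  · exact hy (by linarith)
  · linarith

/-! ### Unimodularity and size bounds -/

lemma abs_Vc (y : ℝ) : Complex.abs (Vc y) = 1 := by
  rw [Vc, Complex.abs_exp]
  have : (-(1/2 : ℂ) * Complex.log (((y:ℂ) - Complex.I) / ((y:ℂ) + Complex.I))).re
      = -(1/2) * Real.log (Complex.abs (((y:ℂ) - Complex.I) / ((y:ℂ) + Complex.I))) := by
    simp [Complex.mul_re, Complex.log_re]
  rw [this, abs_g, Real.log_one, mul_zero, Real.exp_zero]

lemma abs_Wc (y : ℝ) : Complex.abs (Wc y) = 1 := by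
  rw [Wc, Complex.abs_exp]
  have : ((1/2 : ℂ) * Complex.log ((1 + Complex.I * y) / (1 - Complex.I * y))).re
      = (1/2) * Real.log (Complex.abs ((1 + Complex.I * y) / (1 - Complex.I * y))) := by
    simp [Complex.mul_re, Complex.log_re]
  rw [this, abs_h, Real.log_one, mul_zero, Real.exp_zero]

lemma re_Wc_nonneg (y : ℝ) : 0 ≤ (Wc y).re := by
  rw [Wc, Complex.exp_re]
  have him : ((1/2 : ℂ) * Complex.log ((1 + Complex.I * y) / (1 - Complex.I * y))).im
      = (1/2) * Complex.arg ((1 + Complex.I * y) / (1 - Complex.I * y)) := by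
    simp [Complex.mul_im, Complex.log_im]
  rw [him]
  have h1 := Complex.arg_le_pi ((1 + Complex.I * y) / (1 - Complex.I * y))
  have h2 := Complex.neg_pi_lt_arg ((1 + Complex.I * y) / (1 - Complex.I * y))
  have : 0 ≤ Real.cos (1/2 * Complex.arg ((1 + Complex.I * y) / (1 - Complex.I * y))) := by
    apply Real.cos_nonneg_of_mem_Icc
    constructor <;> [linarith; linarith]
  positivity

lemma Wc_sq (y : ℝ) : Wc y ^ 2 = (1 + Complex.I * y) / (1 - Complex.I * y) := by
  rw [Wc, ← Complex.exp_nat_mul]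
  push_cast
  rw [show (2 : ℂ) * ((1/2 : ℂ) * Complex.log ((1 + Complex.I * y) / (1 - Complex.I * y)))
      = Complex.log ((1 + Complex.I * y) / (1 - Complex.I * y)) by ring]
  exact Complex.exp_log (h_ne y)

lemma norm_wf_le (y : ℝ) : Complex.abs (wf y) ≤ 2 * |y| := by
  have hwf : wf y = Wc y - 1 := rfl
  have h1 : (1:ℝ) ≤ Complex.abs (Wc y + 1) := by
    have := Complex.re_le_abs (Wc y + 1)
    have h2 := re_Wc_nonneg y
    simp only [Complex.add_re, Complex.one_re] at this
    linarith
  have key : Complex.abs (wf y) ≤ Complex.abs (wf y) * Complex.abs (Wc y + 1) := by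
    nlinarith [Complex.abs.nonneg (wf y), Complex.abs.nonneg (Wc y + 1)]
  have h3 : Complex.abs (wf y) * Complex.abs (Wc y + 1) = Complex.abs (Wc y ^ 2 - 1) := by
    rw [← map_mul]
    congr 1
    rw [hwf]; ring
  have h4 : Wc y ^ 2 - 1 = 2 * Complex.I * y / (1 - Complex.I * y) := by
    rw [Wc_sq, div_sub_one (den3 y)]
    congr 1
    ring
  have h5 : Complex.abs (2 * Complex.I * y / (1 - Complex.I * y)) ≤ 2 * |y| := by
    rw [map_div₀]
    have habs : Complex.abs (2 * Complex.I * (y:ℂ)) = 2 * |y| := by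
      simp [Complex.abs_apply, Complex.normSq_apply]
    have hden : (1:ℝ) ≤ Complex.abs (1 - Complex.I * y) := by
      have := Complex.re_le_abs (1 - Complex.I * y)
      simp at this
      exact this
    calc Complex.abs (2 * Complex.I * (y:ℂ)) / Complex.abs (1 - Complex.I * y)
        ≤ Complex.abs (2 * Complex.I * (y:ℂ)) / 1 := by
          apply div_le_div_of_nonneg_left (by positivity) (by norm_num) hden
      _ = 2 * |y| := by rw [div_one, habs]
  calc Complex.abs (wf y) ≤ Complex.abs (wf y) * Complex.abs (Wc y + 1) := key
    _ = Complex.abs (Wc y ^ 2 - 1) := h3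
    _ = Complex.abs (2 * Complex.I * y / (1 - Complex.I * y)) := by rw [h4]
    _ ≤ 2 * |y| := h5

/-! ### Derivatives -/

lemma hasDerivAt_g (y : ℝ) :
    HasDerivAt (fun t : ℝ => (((t:ℂ) - Complex.I) / ((t:ℂ) + Complex.I)))
      (2 * Complex.I / (((y:ℂ) + Complex.I)^2)) y := by
  have h1 : HasDerivAt (fun t : ℝ => ((t:ℂ) - Complex.I)) 1 y := by
    simpa using ((hasDerivAt_id y).ofReal_comp).sub_const Complex.I
  have h2 : HasDerivAt (fun t : ℝ => ((t:ℂ) + Complex.I)) 1 y := by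
    simpa using ((hasDerivAt_id y).ofReal_comp).add_const Complex.I
  have h : HasDerivAt (fun t : ℝ => (((t:ℂ) - Complex.I) / ((t:ℂ) + Complex.I))) _ y := h1.div h2 (den1 y)
  convert h using 1
  congr 1
  ring

lemma hasDerivAt_Vc (y : ℝ) (hy : y ≠ 0) :
    HasDerivAt Vc (vd y) y := by
  show HasDerivAt Vc (-Complex.I * Vc y / ((y:ℂ)^2 + 1)) y
  have hlog := (hasDerivAt_g y).clog_real (g_mem y hy)
  have h := (hlog.const_mul (-(1/2 : ℂ))).cexp
  convert h using 1
  · rfl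
  rw [show Complex.exp (-(1/2 : ℂ) * Complex.log (((y:ℂ) - Complex.I) / ((y:ℂ) + Complex.I))) = Vc y from rfl]
  have hI : Complex.I^2 = -1 := Complex.I_sq
  field_simp [den1 y, den2 y, sq_ne y]
  ring_nf
  rw [hI]; ring

lemma hasDerivAt_h (y : ℝ) :
    HasDerivAt (fun t : ℝ => ((1 + Complex.I * t) / (1 - Complex.I * t)))
      (2 * Complex.I / ((1 - Complex.I * (y:ℂ))^2)) y := by
  have h1 : HasDerivAt (fun t : ℝ => (1 + Complex.I * (t:ℂ))) Complex.I y := by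
    simpa using (((hasDerivAt_id y).ofReal_comp).const_mul Complex.I).const_add 1
  have h2 : HasDerivAt (fun t : ℝ => (1 - Complex.I * (t:ℂ))) (-Complex.I) y := by
    simpa using (((hasDerivAt_id y).ofReal_comp).const_mul Complex.I).const_sub 1
  have h : HasDerivAt (fun t : ℝ => ((1 + Complex.I * t) / (1 - Complex.I * t))) _ y := h1.div h2 (den3 y)
  convert h using 1
  congr 1
  ring

lemma hasDerivAt_Wc (y : ℝ) :
    HasDerivAt Wc (wd y) y := by
  show HasDerivAt Wc (Complex.I * Wc y / (1 + (y:ℂ)^2)) y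
  have hlog := (hasDerivAt_h y).clog_real (h_mem y)
  have h := (hlog.const_mul ((1/2 : ℂ))).cexp
  convert h using 1
  · rfl
  rw [show Complex.exp ((1/2 : ℂ) * Complex.log ((1 + Complex.I * y) / (1 - Complex.I * y))) = Wc y from rfl]
  have hI : Complex.I^2 = -1 := Complex.I_sq
  field_simp [den3 y, den4 y, sq_ne' y]
  ring_nf
  rw [hI]; ring

lemma hasDerivAt_sq1 (y : ℝ) : HasDerivAt (fun t : ℝ => ((t:ℂ)^2 + 1)) (2*(y:ℂ)) y := by
  have h : HasDerivAt (fun t : ℝ => ((t:ℂ))) 1 y := by simpa using (hasDerivAt_id y).ofReal_comp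
  have h2 : HasDerivAt (fun t : ℝ => (t:ℂ)*(t:ℂ) + 1) _ y := (h.mul h).add_const (1:ℂ)
  simp only [pow_two]
  convert h2 using 1
  ring

lemma hasDerivAt_sq2 (y : ℝ) : HasDerivAt (fun t : ℝ => (1 + (t:ℂ)^2)) (2*(y:ℂ)) y := by
  have h : HasDerivAt (fun t : ℝ => ((t:ℂ))) 1 y := by simpa using (hasDerivAt_id y).ofReal_comp
  have h2 : HasDerivAt (fun t : ℝ => 1 + (t:ℂ)*(t:ℂ)) _ y := (h.mul h).const_add (1:ℂ)
  simp only [pow_two]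
  convert h2 using 1
  ring

lemma hasDerivAt_vd (y : ℝ) (hy : y ≠ 0) :
    HasDerivAt vd (vdd y) y := by
  show HasDerivAt (fun t : ℝ => -Complex.I * Vc t / ((t:ℂ)^2 + 1))
      (Vc y * (2*Complex.I*(y:ℂ) - 1) / (((y:ℂ)^2 + 1)^2)) y
  have hnum : HasDerivAt (fun t : ℝ => -Complex.I * Vc t)
      (-Complex.I * (-Complex.I * Vc y / ((y:ℂ)^2 + 1))) y := (hasDerivAt_Vc y hy).const_mul _
  have h : HasDerivAt (fun t : ℝ => -Complex.I * Vc t / ((t:ℂ)^2 + 1)) _ y :=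
    hnum.div (hasDerivAt_sq1 y) (sq_ne y)
  convert h using 1
  have hI : Complex.I^2 = -1 := Complex.I_sq
  field_simp [sq_ne y]
  ring_nf
  simp only [hI]
  ring

lemma hasDerivAt_wd (y : ℝ) :
    HasDerivAt wd (wdd y) y := by
  show HasDerivAt (fun t : ℝ => Complex.I * Wc t / (1 + (t:ℂ)^2))
      (-Wc y * (1 + 2*Complex.I*(y:ℂ)) / ((1 + (y:ℂ)^2)^2)) y
  have hnum : HasDerivAt (fun t : ℝ => Complex.I * Wc t)
      (Complex.I * (Complex.I * Wc y / (1 + (y:ℂ)^2))) y := (hasDerivAt_Wc y).const_mul _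
  have h : HasDerivAt (fun t : ℝ => Complex.I * Wc t / (1 + (t:ℂ)^2)) _ y :=
    hnum.div (hasDerivAt_sq2 y) (sq_ne' y)
  convert h using 1
  have hI : Complex.I^2 = -1 := Complex.I_sq
  field_simp [sq_ne' y]
  ring_nf
  simp only [hI]
  ring

lemma comp_div (ε x : ℝ) {f : ℝ → ℂ} {f' : ℂ} (hf : HasDerivAt f f' (x/ε)) :
    HasDerivAt (fun t : ℝ => f (t/ε)) (f' * (ε:ℂ)⁻¹) x := by
  have hinner : HasDerivAt (fun t : ℝ => t/ε) (1/ε) x := by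
    simpa using (hasDerivAt_id x).div_const ε
  have : HasDerivAt (fun t : ℝ => f (t/ε)) _ x := HasDerivAt.scomp (𝕜 := ℝ) x hf hinner
  convert this using 1
  simp [Complex.real_smul]
  ring

lemma comp_mul (ε x : ℝ) {f : ℝ → ℂ} {f' : ℂ} (hf : HasDerivAt f f' (ε*x)) :
    HasDerivAt (fun t : ℝ => f (ε*t)) (f' * (ε:ℂ)) x := by
  have hinner : HasDerivAt (fun t : ℝ => ε*t) ε x := by
    simpa using (hasDerivAt_id x).const_mul ε
  have : HasDerivAt (fun t : ℝ => f (ε*t)) _ x := HasDerivAt.scomp (𝕜 := ℝ) x hf hinner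
  convert this using 1
  simp [Complex.real_smul]
  ring

lemma hasDerivAt_vf (y : ℝ) (hy : y ≠ 0) : HasDerivAt vf (vd y) y := by
  have := (hasDerivAt_Vc y hy).sub_const 1
  exact this

lemma hasDerivAt_wf (y : ℝ) : HasDerivAt wf (wd y) y := by
  have := (hasDerivAt_Wc y).sub_const 1
  exact this

lemma hasDerivAt_Ff (ε x : ℝ) (hε : ε ≠ 0) (hx : x ≠ 0) :
    HasDerivAt (Ff ε) (F1 ε x) x := by
  have hxε : x / ε ≠ 0 := div_ne_zero hx hε
  have hv := comp_div ε x (hasDerivAt_vf (x/ε) hxε)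
  have hw := comp_mul ε x (hasDerivAt_wf (ε*x))
  exact hv.mul hw

lemma deriv_Ff (ε x : ℝ) (hε : ε ≠ 0) (hx : x ≠ 0) : deriv (Ff ε) x = F1 ε x :=
  (hasDerivAt_Ff ε x hε hx).deriv

lemma hasDerivAt_F1 (ε x : ℝ) (hε : ε ≠ 0) (hx : x ≠ 0) :
    HasDerivAt (F1 ε) (F2 ε x) x := by
  have hxε : x / ε ≠ 0 := div_ne_zero hx hε
  have hA := (comp_div ε x (hasDerivAt_vd (x/ε) hxε)).mul_const ((ε:ℂ)⁻¹)
  have hB := comp_mul ε x (hasDerivAt_wf (ε*x))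
  have hC := comp_div ε x (hasDerivAt_vf (x/ε) hxε)
  have hD := (comp_mul ε x (hasDerivAt_wd (ε*x))).mul_const ((ε:ℂ))
  have h1 := hA.mul hB
  have h2 := hC.mul hD
  have : HasDerivAt (F1 ε) (F2 ε x) x := h1.add h2
  convert this using 1

lemma deriv_deriv_Ff (ε x : ℝ) (hε : ε ≠ 0) (hx : x ≠ 0) :
    deriv (deriv (Ff ε)) x = F2 ε x := by
  have hev : deriv (Ff ε) =ᶠ[nhds x] F1 ε := by
    filter_upwards [eventually_ne_nhds hx] with t ht
    exact deriv_Ff ε t hε ht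
  rw [Filter.EventuallyEq.deriv_eq hev]
  exact (hasDerivAt_F1 ε x hε hx).deriv

/-! ### Pointwise bounds -/

lemma abs_sq1 (y : ℝ) : Complex.abs ((y:ℂ)^2 + 1) = y^2 + 1 := by
  rw [show ((y:ℂ)^2 + 1) = (((y^2+1 : ℝ)) : ℂ) by push_cast; ring, Complex.abs_ofReal]
  exact abs_of_pos (by positivity)

lemma abs_sq2 (y : ℝ) : Complex.abs (1 + (y:ℂ)^2) = 1 + y^2 := by
  rw [show (1 + (y:ℂ)^2) = (((1+y^2 : ℝ)) : ℂ) by push_cast; ring, Complex.abs_ofReal]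
  exact abs_of_pos (by positivity)

lemma abs_vd (y : ℝ) : Complex.abs (vd y) = 1/(y^2+1) := by
  rw [vd, map_div₀, map_mul, abs_sq1, abs_Vc]
  simp

lemma abs_wd (y : ℝ) : Complex.abs (wd y) = 1/(1+y^2) := by
  rw [wd, map_div₀, map_mul, abs_sq2, abs_Wc]
  simp

lemma abs_wd_le (y : ℝ) : Complex.abs (wd y) ≤ 1 := by
  rw [abs_wd]
  rw [div_le_one (by positivity)]
  nlinarith [sq_nonneg y]

lemma abs_vf_le (y : ℝ) : Complex.abs (vf y) ≤ 2 := by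
  have h : vf y = Vc y - 1 := rfl
  rw [h]
  calc Complex.abs (Vc y - 1) ≤ Complex.abs (Vc y) + Complex.abs 1 := by
        simpa using Complex.abs.sub_le (Vc y) 0 1
    _ ≤ 2 := by rw [abs_Vc]; norm_num

lemma abs_vdd_le (y : ℝ) : Complex.abs (vdd y) ≤ 2/(y^2+1) := by
  rw [vdd, map_div₀, map_mul, abs_Vc, one_mul, map_pow, abs_sq1]
  have h1 : Complex.abs (2*Complex.I*(y:ℂ) - 1) ≤ 2*|y| + 1 := by
    calc Complex.abs (2*Complex.I*(y:ℂ) - 1) ≤ Complex.abs (2*Complex.I*(y:ℂ)) + Complex.abs 1 := by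
          simpa using Complex.abs.sub_le (2*Complex.I*(y:ℂ)) 0 1
      _ = 2*|y| + 1 := by simp [map_mul, Complex.abs_ofReal]; try ring
  have h2 : (0:ℝ) < y^2+1 := by positivity
  have h3 : 2*|y| + 1 ≤ 2*(y^2+1) := by nlinarith [_root_.sq_abs y, sq_nonneg (|y|-1)]
  calc Complex.abs (2*Complex.I*(y:ℂ) - 1) / (y^2+1)^2 ≤ (2*(y^2+1)) / (y^2+1)^2 := by
        apply div_le_div_of_nonneg_right ?_ (by positivity)
        · linarith
    _ = 2/(y^2+1) := by field_simp

lemma abs_wdd_le (y : ℝ) : Complex.abs (wdd y) ≤ 2 := by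
  rw [wdd, map_div₀, map_mul, map_neg_eq_map, abs_Wc, one_mul, map_pow, abs_sq2]
  have h1 : Complex.abs (1 + 2*Complex.I*(y:ℂ)) ≤ 1 + 2*|y| := by
    calc Complex.abs (1 + 2*Complex.I*(y:ℂ)) ≤ Complex.abs 1 + Complex.abs (2*Complex.I*(y:ℂ)) :=
          Complex.abs.add_le _ _
      _ = 1 + 2*|y| := by simp [map_mul, Complex.abs_ofReal]
  have h2 : (0:ℝ) < 1+y^2 := by positivity
  have h3 : 1 + 2*|y| ≤ 2*(1+y^2)^2 := by
    nlinarith [_root_.sq_abs y, sq_nonneg (|y|-1), sq_nonneg y, abs_nonneg y]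
  calc Complex.abs (1 + 2*Complex.I*(y:ℂ)) / (1+y^2)^2 ≤ (2*(1+y^2)^2) / (1+y^2)^2 := by
        apply div_le_div_of_nonneg_right ?_ (by positivity)
        · linarith
    _ = 2 := by field_simp

lemma abs_inv_eps (ε : ℝ) (hε : 0 < ε) : Complex.abs ((ε:ℂ)⁻¹) = ε⁻¹ := by
  rw [map_inv₀, Complex.abs_ofReal, abs_of_pos hε]

lemma abs_eps (ε : ℝ) (hε : 0 < ε) : Complex.abs ((ε:ℂ)) = ε := by
  rw [Complex.abs_ofReal, abs_of_pos hε]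

lemma hy2 (ε x : ℝ) (hε : 0 < ε) : (x/ε)^2 + 1 = (x^2+ε^2)/ε^2 := by
  field_simp

lemma norm_F1_le (ε x : ℝ) (hε : 0 < ε) (hx : x ≠ 0) : Complex.abs (F1 ε x) ≤ 3*ε := by
  have hpos : (0:ℝ) < x^2 + ε^2 := by positivity
  have t1 : Complex.abs ((vd (x/ε) * (ε:ℂ)⁻¹) * wf (ε*x)) ≤ ε := by
    rw [map_mul, map_mul, abs_vd, abs_inv_eps ε hε]
    have hb : Complex.abs (wf (ε*x)) ≤ 2*(ε*|x|) := by
      calc Complex.abs (wf (ε*x)) ≤ 2*|ε*x| := norm_wf_le (ε*x)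
        _ = 2*(ε*|x|) := by rw [abs_mul, abs_of_pos hε]
    calc 1/((x/ε)^2+1) * ε⁻¹ * Complex.abs (wf (ε*x))
        ≤ 1/((x/ε)^2+1) * ε⁻¹ * (2*(ε*|x|)) := by
          apply mul_le_mul_of_nonneg_left hb (by positivity)
      _ = 2*ε^2*|x|/(x^2+ε^2) := by rw [hy2 ε x hε]; field_simp
      _ ≤ ε := by
          rw [div_le_iff₀ hpos]
          nlinarith [sq_nonneg (|x| - ε), _root_.sq_abs x, abs_nonneg x]
  have t2 : Complex.abs (vf (x/ε) * (wd (ε*x) * ε)) ≤ 2*ε := by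
    rw [map_mul, map_mul, abs_eps ε hε]
    have h1 : Complex.abs (vf (x/ε)) * (Complex.abs (wd (ε*x)) * ε) ≤ 2 * (1 * ε) :=
      mul_le_mul (abs_vf_le _) (mul_le_mul_of_nonneg_right (abs_wd_le _) hε.le)
        (by positivity) (by norm_num)
    linarith
  calc Complex.abs (F1 ε x) ≤ Complex.abs ((vd (x/ε) * (ε:ℂ)⁻¹) * wf (ε*x))
        + Complex.abs (vf (x/ε) * (wd (ε*x) * ε)) := Complex.abs.add_le _ _
    _ ≤ ε + 2*ε := add_le_add t1 t2
    _ = 3*ε := by ring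

lemma keyA (ε x : ℝ) (hε : 0 < ε) (hx : x ≠ 0) :
    ε*|x|/(x^2+ε^2) ≤ Real.sqrt ε / Real.sqrt |x| := by
  have hx0 : 0 < |x| := abs_pos.2 hx
  have hpos : (0:ℝ) < x^2 + ε^2 := by positivity
  have hsx : Real.sqrt |x| ^ 2 = |x| := Real.sq_sqrt hx0.le
  have hse : Real.sqrt ε ^ 2 = ε := Real.sq_sqrt hε.le
  have hsxp : 0 < Real.sqrt |x| := Real.sqrt_pos.2 hx0
  have hsep : 0 < Real.sqrt ε := Real.sqrt_pos.2 hε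
  have hden : |x| * Real.sqrt |x| * Real.sqrt ε ≤ x^2 + ε^2 := by
    rcases le_total ε |x| with h | h
    · have hs : Real.sqrt ε ≤ Real.sqrt |x| := Real.sqrt_le_sqrt h
      have p1 : |x| * Real.sqrt |x| * Real.sqrt ε ≤ |x| * Real.sqrt |x| * Real.sqrt |x| :=
        mul_le_mul_of_nonneg_left hs (by positivity)
      nlinarith [_root_.sq_abs x, sq_nonneg ε]
    · have hs : Real.sqrt |x| ≤ Real.sqrt ε := Real.sqrt_le_sqrt h
      have p1 : |x| * Real.sqrt |x| * Real.sqrt ε ≤ ε * Real.sqrt ε * Real.sqrt ε :=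
        mul_le_mul (mul_le_mul h hs (Real.sqrt_nonneg _) hε.le) le_rfl
          (Real.sqrt_nonneg _) (by positivity)
      nlinarith [_root_.sq_abs x, sq_nonneg x]
  rw [div_le_div_iff₀ hpos hsxp]
  nlinarith [mul_le_mul_of_nonneg_left hden hsep.le]

lemma keyB (ε x : ℝ) (hε : 0 < ε) (hx : x ≠ 0) :
    ε^2/(x^2+ε^2) ≤ Real.sqrt ε / Real.sqrt |x| := by
  have hx0 : 0 < |x| := abs_pos.2 hx
  have hpos : (0:ℝ) < x^2 + ε^2 := by positivity
  have hsx : Real.sqrt |x| ^ 2 = |x| := Real.sq_sqrt hx0.le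
  have hse : Real.sqrt ε ^ 2 = ε := Real.sq_sqrt hε.le
  have hsxp : 0 < Real.sqrt |x| := Real.sqrt_pos.2 hx0
  have hsep : 0 < Real.sqrt ε := Real.sqrt_pos.2 hε
  have hden : Real.sqrt |x| * ε * Real.sqrt ε ≤ x^2 + ε^2 := by
    rcases le_total ε |x| with h | h
    · have hs : Real.sqrt ε ≤ Real.sqrt |x| := Real.sqrt_le_sqrt h
      have p1 : Real.sqrt |x| * ε * Real.sqrt ε ≤ Real.sqrt |x| * |x| * Real.sqrt |x| :=
        mul_le_mul (mul_le_mul_of_nonneg_left h (Real.sqrt_nonneg _)) hs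
          (Real.sqrt_nonneg _) (by positivity)
      nlinarith [_root_.sq_abs x, sq_nonneg ε]
    · have hs : Real.sqrt |x| ≤ Real.sqrt ε := Real.sqrt_le_sqrt h
      have p1 : Real.sqrt |x| * ε * Real.sqrt ε ≤ Real.sqrt ε * ε * Real.sqrt ε :=
        mul_le_mul_of_nonneg_right (mul_le_mul_of_nonneg_right hs hε.le)
          (Real.sqrt_nonneg _)
      nlinarith [_root_.sq_abs x, sq_nonneg x]
  rw [div_le_div_iff₀ hpos hsxp]
  nlinarith [mul_le_mul_of_nonneg_left hden hsep.le]

lemma norm_F2_le (ε x : ℝ) (hε : 0 < ε) (hx : x ≠ 0) :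
    Complex.abs (F2 ε x) ≤ 6*(Real.sqrt ε / Real.sqrt |x|) + 4*ε^2 := by
  have hpos : (0:ℝ) < x^2 + ε^2 := by positivity
  have t1 : Complex.abs ((vdd (x/ε) * (ε:ℂ)⁻¹ * (ε:ℂ)⁻¹) * wf (ε*x))
      ≤ 4*(Real.sqrt ε / Real.sqrt |x|) := by
    rw [map_mul, map_mul, map_mul, abs_inv_eps ε hε]
    have hb : Complex.abs (wf (ε*x)) ≤ 2*(ε*|x|) := by
      calc Complex.abs (wf (ε*x)) ≤ 2*|ε*x| := norm_wf_le (ε*x)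
        _ = 2*(ε*|x|) := by rw [abs_mul, abs_of_pos hε]
    have hvdd := abs_vdd_le (x/ε)
    have e1 : Complex.abs (vdd (x/ε)) * ε⁻¹ * ε⁻¹ * Complex.abs (wf (ε*x))
        ≤ (2/((x/ε)^2+1)) * ε⁻¹ * ε⁻¹ * (2*(ε*|x|)) :=
      mul_le_mul (mul_le_mul_of_nonneg_right
          (mul_le_mul_of_nonneg_right hvdd (by positivity)) (by positivity)) hb
        (Complex.abs.nonneg _) (by positivity)
    have e2 : (2/((x/ε)^2+1)) * ε⁻¹ * ε⁻¹ * (2*(ε*|x|)) = 4*(ε*|x|/(x^2+ε^2)) := by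
      rw [hy2 ε x hε]; field_simp; ring
    calc Complex.abs (vdd (x/ε)) * ε⁻¹ * ε⁻¹ * Complex.abs (wf (ε*x))
        ≤ (2/((x/ε)^2+1)) * ε⁻¹ * ε⁻¹ * (2*(ε*|x|)) := e1
      _ = 4*(ε*|x|/(x^2+ε^2)) := e2
      _ ≤ 4*(Real.sqrt ε / Real.sqrt |x|) := by
          have := keyA ε x hε hx; linarith
  have t2 : Complex.abs ((vd (x/ε) * (ε:ℂ)⁻¹) * (wd (ε*x) * ε))
      ≤ Real.sqrt ε / Real.sqrt |x| := by
    rw [map_mul, map_mul, map_mul, abs_inv_eps ε hε, abs_eps ε hε, abs_vd]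
    have e1 : 1/((x/ε)^2+1) * ε⁻¹ * (Complex.abs (wd (ε*x)) * ε)
        ≤ 1/((x/ε)^2+1) * ε⁻¹ * (1 * ε) := by
      apply mul_le_mul_of_nonneg_left
        (mul_le_mul_of_nonneg_right (abs_wd_le _) hε.le) (by positivity)
    have e2 : 1/((x/ε)^2+1) * ε⁻¹ * (1 * ε) = ε^2/(x^2+ε^2) := by
      rw [hy2 ε x hε]; field_simp
    calc 1/((x/ε)^2+1) * ε⁻¹ * (Complex.abs (wd (ε*x)) * ε)
        ≤ 1/((x/ε)^2+1) * ε⁻¹ * (1 * ε) := e1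
      _ = ε^2/(x^2+ε^2) := e2
      _ ≤ Real.sqrt ε / Real.sqrt |x| := keyB ε x hε hx
  have t4 : Complex.abs (vf (x/ε) * (wdd (ε*x) * ε * ε)) ≤ 4*ε^2 := by
    rw [map_mul, map_mul, map_mul, abs_eps ε hε]
    have h1 : Complex.abs (vf (x/ε)) * (Complex.abs (wdd (ε*x)) * ε * ε) ≤ 2 * (2 * ε * ε) :=
      mul_le_mul (abs_vf_le _) (mul_le_mul_of_nonneg_right
          (mul_le_mul_of_nonneg_right (abs_wdd_le _) hε.le) hε.le)
        (by positivity) (by norm_num)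
    nlinarith
  calc Complex.abs (F2 ε x)
      ≤ Complex.abs ((vdd (x/ε) * (ε:ℂ)⁻¹ * (ε:ℂ)⁻¹) * wf (ε*x) + (vd (x/ε) * (ε:ℂ)⁻¹) * (wd (ε*x) * ε))
        + Complex.abs ((vd (x/ε) * (ε:ℂ)⁻¹) * (wd (ε*x) * ε) + vf (x/ε) * (wdd (ε*x) * ε * ε)) :=
        Complex.abs.add_le _ _
    _ ≤ (Complex.abs ((vdd (x/ε) * (ε:ℂ)⁻¹ * (ε:ℂ)⁻¹) * wf (ε*x))
          + Complex.abs ((vd (x/ε) * (ε:ℂ)⁻¹) * (wd (ε*x) * ε)))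
        + (Complex.abs ((vd (x/ε) * (ε:ℂ)⁻¹) * (wd (ε*x) * ε))
          + Complex.abs (vf (x/ε) * (wdd (ε*x) * ε * ε))) :=
        add_le_add (Complex.abs.add_le _ _) (Complex.abs.add_le _ _)
    _ ≤ (4*(Real.sqrt ε / Real.sqrt |x|) + (Real.sqrt ε / Real.sqrt |x|))
        + ((Real.sqrt ε / Real.sqrt |x|) + 4*ε^2) :=
        add_le_add (add_le_add t1 t2) (add_le_add t2 t4)
    _ = 6*(Real.sqrt ε / Real.sqrt |x|) + 4*ε^2 := by ring

/-! ### Integral computations -/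

open MeasureTheory intervalIntegral in
lemma neg_rpow_zero {x : ℝ} (hx : x < 0) : x ^ (-(1/2) : ℝ) = 0 := by
  rw [Real.rpow_def_of_neg hx]
  rw [show (-(1/2) : ℝ) * Real.pi = -(Real.pi/2) by ring]
  rw [Real.cos_neg, Real.cos_pi_div_two, mul_zero]

lemma pos_rpow {x : ℝ} (hx : 0 < x) : x ^ (-(1/2) : ℝ) = (Real.sqrt x)⁻¹ := by
  rw [show (-(1/2) : ℝ) = -(1/2) from rfl, Real.rpow_neg hx.le, Real.sqrt_eq_rpow]

lemma split_rpow {x : ℝ} (hx : x ≠ 0) :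
    1 / Real.sqrt |x| = x ^ (-(1/2) : ℝ) + (-x) ^ (-(1/2) : ℝ) := by
  rcases hx.lt_or_gt with h | h
  · rw [neg_rpow_zero h, pos_rpow (neg_pos.2 h), abs_of_neg h, zero_add, one_div]
  · rw [neg_rpow_zero (by linarith : -x < 0), pos_rpow h, abs_of_pos h, add_zero, one_div]

open MeasureTheory in
lemma intInt_rpow (a b : ℝ) : IntervalIntegrable (fun x : ℝ => x ^ (-(1/2) : ℝ)) volume a b :=
  intervalIntegral.intervalIntegrable_rpow' (by norm_num)

open MeasureTheory in
lemma intInt_rpow_neg (a b : ℝ) :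
    IntervalIntegrable (fun x : ℝ => (-x) ^ (-(1/2) : ℝ)) volume a b := by
  have := (IntervalIntegrable.iff_comp_neg (f := fun x : ℝ => x ^ (-(1/2) : ℝ))).mp (intInt_rpow (-a) (-b))
  simpa using this

open MeasureTheory intervalIntegral in
lemma int_rpow (L : ℝ) (hL : 0 < L) :
    (∫ x in (-L)..L, x ^ (-(1/2) : ℝ)) = 2 * Real.sqrt L := by
  rw [integral_rpow (Or.inl (by norm_num))]
  rw [show (-(1/2) : ℝ) + 1 = 1/2 by norm_num]
  have h1 : L ^ (1/2 : ℝ) = Real.sqrt L := (Real.sqrt_eq_rpow L).symm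
  have h2 : (-L) ^ (1/2 : ℝ) = 0 := by
    rw [Real.rpow_def_of_neg (by linarith)]
    rw [show (1/2 : ℝ) * Real.pi = Real.pi/2 by ring, Real.cos_pi_div_two, mul_zero]
  rw [h1, h2]
  ring

open MeasureTheory intervalIntegral in
lemma int_rpow_neg (L : ℝ) (hL : 0 < L) :
    (∫ x in (-L)..L, (-x) ^ (-(1/2) : ℝ)) = 2 * Real.sqrt L := by
  have := intervalIntegral.integral_comp_neg (a := -L) (b := L) (fun x : ℝ => x ^ (-(1/2) : ℝ))
  simp only [neg_neg] at this
  rw [this, int_rpow L hL]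

open MeasureTheory intervalIntegral in
lemma int_G (L ε : ℝ) (hL : 0 < L) :
    (∫ x in (-L)..L, (6 * Real.sqrt ε * (x ^ (-(1/2) : ℝ) + (-x) ^ (-(1/2) : ℝ)) + 4*ε^2))
      = 6 * Real.sqrt ε * (4 * Real.sqrt L) + 4*ε^2*(2*L) := by
  have i1 := intInt_rpow (-L) L
  have i2 := intInt_rpow_neg (-L) L
  have i3 : IntervalIntegrable
      (fun x : ℝ => 6 * Real.sqrt ε * (x ^ (-(1/2) : ℝ) + (-x) ^ (-(1/2) : ℝ))) volume (-L) L :=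
    (i1.add i2).const_mul _
  rw [intervalIntegral.integral_add i3 (_root_.intervalIntegrable_const (c := 4*ε^2))]
  rw [intervalIntegral.integral_const_mul]
  rw [intervalIntegral.integral_add i1 i2, int_rpow L hL, int_rpow_neg L hL]
  rw [intervalIntegral.integral_const]
  simp only [smul_eq_mul]
  ring

/-! ### Main theorem -/

open MeasureTheory in
/-- On `I₀ = [−1−√2, 1+√2]`, as `ε → 0` (with `0 < ε ≤ 1`):
`sup_{x ∈ I₀, x ≠ 0} |F_ε′(x)| → 0` and `∫_{I₀} |F_ε″(x)| dx → 0`. -/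
theorem stmt16 :
    (∀ δ : ℝ, 0 < δ → ∃ ε₀ : ℝ, 0 < ε₀ ∧ ∀ ε : ℝ, 0 < ε → ε ≤ 1 → ε < ε₀ →
      ∀ x ∈ Set.Icc (-1 - Real.sqrt 2) (1 + Real.sqrt 2), x ≠ 0 →
        ‖deriv (Ff ε) x‖ < δ) ∧
    (∀ δ : ℝ, 0 < δ → ∃ ε₀ : ℝ, 0 < ε₀ ∧ ∀ ε : ℝ, 0 < ε → ε ≤ 1 → ε < ε₀ →
      (∫ x in (-1 - Real.sqrt 2)..(1 + Real.sqrt 2), ‖deriv (deriv (Ff ε)) x‖) < δ) := by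
  constructor
  · intro δ hδ
    refine ⟨δ/3, by positivity, ?_⟩
    intro ε hε hε1 hεδ x hxI hx
    rw [deriv_Ff ε x (ne_of_gt hε) hx, Complex.norm_eq_abs]
    calc Complex.abs (F1 ε x) ≤ 3*ε := norm_F1_le ε x hε hx
      _ < 3*(δ/3) := by linarith
      _ = δ := by ring
  · intro δ hδ
    refine ⟨min 1 ((δ/72)^2), by positivity, ?_⟩
    intro ε hε hε1 hεδ
    have hs2 : Real.sqrt 2 ≤ 2 := by
      nlinarith [Real.sq_sqrt (by norm_num : (0:ℝ) ≤ 2), Real.sqrt_nonneg 2]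
    set L : ℝ := 1 + Real.sqrt 2 with hLdef
    have hL0 : (0:ℝ) < L := by positivity
    have hL3 : L ≤ 3 := by rw [hLdef]; linarith
    have hsL : Real.sqrt L ≤ 2 := by
      nlinarith [Real.sq_sqrt hL0.le, Real.sqrt_nonneg L]
    have hL' : (-1 - Real.sqrt 2 : ℝ) = -L := by rw [hLdef]; ring
    rw [hL']
    set G : ℝ → ℝ := fun x => 6 * Real.sqrt ε * (x ^ (-(1/2) : ℝ) + (-x) ^ (-(1/2) : ℝ)) + 4*ε^2
      with hGdef
    have hGint : IntervalIntegrable G volume (-L) L :=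
      (((intInt_rpow (-L) L).add (intInt_rpow_neg (-L) L)).const_mul _).add
        (_root_.intervalIntegrable_const (c := 4*ε^2))
    have h0 : ∀ᵐ (t : ℝ), t ≠ 0 := by
      rw [MeasureTheory.ae_iff]
      have hset : {a : ℝ | ¬a ≠ 0} = {0} := by ext a; simp
      rw [hset]
      exact Real.volume_singleton
    have hae : ∀ᵐ t ∂(volume.restrict (Set.uIoc (-L) L)),
        ‖‖deriv (deriv (Ff ε)) t‖‖ ≤ G t := by
      apply ae_restrict_of_ae
      filter_upwards [h0] with t ht
      rw [norm_norm, deriv_deriv_Ff ε t (ne_of_gt hε) ht, Complex.norm_eq_abs]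
      have h1 := norm_F2_le ε t hε ht
      have hGt : G t = 6*(Real.sqrt ε/Real.sqrt |t|) + 4*ε^2 := by
        rw [hGdef]
        simp only
        rw [← split_rpow ht]
        ring
      rw [hGt]
      exact h1
    have key := intervalIntegral.norm_integral_le_abs_of_norm_le hae hGint
    have hIG : (∫ x in (-L)..L, G x)
        = 6 * Real.sqrt ε * (4 * Real.sqrt L) + 4*ε^2*(2*L) := int_G L ε hL0
    have hsqε : Real.sqrt ε < δ/72 := by
      have h1 : ε < (δ/72)^2 := lt_of_lt_of_le hεδ (min_le_right _ _)
      have h2 := Real.sqrt_lt_sqrt hε.le h1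
      rwa [Real.sqrt_sq (by positivity)] at h2
    have hεsq : ε^2 ≤ Real.sqrt ε := by
      nlinarith [Real.sq_sqrt hε.le, Real.sqrt_nonneg ε, sq_nonneg (Real.sqrt ε - 1),
        sq_nonneg (Real.sqrt ε + 1), sq_nonneg (Real.sqrt ε)]
    have hfin : 6 * Real.sqrt ε * (4 * Real.sqrt L) + 4*ε^2*(2*L) ≤ 72 * Real.sqrt ε := by
      have h1 : 6 * Real.sqrt ε * (4 * Real.sqrt L) ≤ 48 * Real.sqrt ε := by
        nlinarith [Real.sqrt_nonneg ε]
      have h2 : 4*ε^2*(2*L) ≤ 24 * Real.sqrt ε := by nlinarith [sq_nonneg ε]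
      linarith
    calc (∫ x in (-L)..L, ‖deriv (deriv (Ff ε)) x‖)
        ≤ |∫ x in (-L)..L, ‖deriv (deriv (Ff ε)) x‖| := le_abs_self _
      _ = ‖∫ x in (-L)..L, ‖deriv (deriv (Ff ε)) x‖‖ := (Real.norm_eq_abs _).symm
      _ ≤ |∫ x in (-L)..L, G x| := key
      _ = ∫ x in (-L)..L, G x := abs_of_nonneg (by rw [hIG]; positivity)
      _ = 6 * Real.sqrt ε * (4 * Real.sqrt L) + 4*ε^2*(2*L) := hIG
      _ ≤ 72 * Real.sqrt ε := hfin
      _ < 72 * (δ/72) := by linarith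
      _ = δ := by ring

end
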